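/- Let p ∈ ℕ and let P be a real univariate polynomial of degree at most 2p. Then P is nonnegative on all of ℝ if and only if there exists a real (p+1)×(p+1) positive semidefinite symmetric matrix Q (indexed by 0,…,p) such that for all x ∈ ℝ, P(x) = ∑_{i=0}^{p} ∑_{j=0}^{p} Q_{ij} x^{i+j}. -/

import Mathlib

open Polynomial Matrix

-- double root at a real root of a nonneg polynomial
lemma double_root {P : ℝ[X]} (hP : ∀ x : ℝ, 0 ≤ P.eval x) {a : ℝ} (ha : P.IsRoot a) :
    ∃ S : ℝ[X], P = (X - C a) ^ 2 * S ∧ ∀ x : ℝ, 0 ≤ S.eval x := by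
  obtain ⟨R, hR⟩ := (dvd_iff_isRoot.mpr ha)
  have hRcont : Continuous fun x : ℝ => R.eval x := R.continuous
  have hRpos : ∀ x, a < x → 0 ≤ R.eval x := by
    intro x hx
    have h := hP x
    rw [hR] at h
    simp only [eval_mul, eval_sub, eval_X, eval_C] at h
    nlinarith
  have hRneg : ∀ x, x < a → R.eval x ≤ 0 := by
    intro x hx
    have h := hP x
    rw [hR] at h
    simp only [eval_mul, eval_sub, eval_X, eval_C] at h
    nlinarith
  have hRa : R.IsRoot a := by
    have h1 : 0 ≤ R.eval a := by
      refine ge_of_tendsto (hRcont.continuousWithinAt (s := Set.Ioi a)) ?_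
      filter_upwards [self_mem_nhdsWithin] with x hx using hRpos x hx
    have h2 : R.eval a ≤ 0 := by
      refine le_of_tendsto (hRcont.continuousWithinAt (s := Set.Iio a)) ?_
      filter_upwards [self_mem_nhdsWithin] with x hx using hRneg x hx
    exact le_antisymm h2 h1
  obtain ⟨S, hS⟩ := (dvd_iff_isRoot.mpr hRa)
  refine ⟨S, by rw [hR, hS]; ring, ?_⟩
  have hScont : Continuous fun x : ℝ => S.eval x := S.continuous
  have hSne : ∀ x, x ≠ a → 0 ≤ S.eval x := by
    intro x hx
    have h := hP x
    rw [hR, hS] at h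
    simp only [eval_mul, eval_sub, eval_X, eval_C] at h
    have : (x - a) ^ 2 > 0 := by have := sub_ne_zero.mpr hx; positivity
    nlinarith
  intro x
  rcases eq_or_ne x a with rfl | hx
  · refine ge_of_tendsto (hScont.continuousWithinAt (s := Set.Ioi x)) ?_
    filter_upwards [self_mem_nhdsWithin] with y hy using hSne y (ne_of_gt hy)
  · exact hSne x hx

-- main sum of squares lemma
lemma sos_aux : ∀ n : ℕ, ∀ P : ℝ[X], P.natDegree ≤ n → (∀ x : ℝ, 0 ≤ P.eval x) →
    ∃ A B : ℝ[X], P = A ^ 2 + B ^ 2 := by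
  intro n
  induction n using Nat.strong_induction_on with
  | _ n IH =>
    intro P hn hP
    rcases eq_or_ne P 0 with rfl | hP0
    · exact ⟨0, 0, by ring⟩
    rcases Nat.eq_zero_or_pos P.natDegree with hd0 | hdpos
    · -- constant
      have hc : 0 ≤ P.coeff 0 := by
        have := hP 0; rwa [← coeff_zero_eq_eval_zero] at this
      refine ⟨C (Real.sqrt (P.coeff 0)), 0, ?_⟩
      conv_lhs => rw [Polynomial.eq_C_of_natDegree_eq_zero hd0]
      rw [← C_pow, Real.sq_sqrt hc]; ring
    -- degree ≥ 1
    have hn1 : 1 ≤ n := le_trans hdpos hn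
    by_cases hroot : ∃ a : ℝ, P.IsRoot a
    · obtain ⟨a, ha⟩ := hroot
      obtain ⟨S, hPS, hSnn⟩ := double_root hP ha
      have hS0 : S ≠ 0 := by rintro rfl; simp at hPS; exact hP0 hPS
      have hq0 : ((X - C a) ^ 2 : ℝ[X]) ≠ 0 := by
        apply pow_ne_zero; exact X_sub_C_ne_zero a
      have hdeg : P.natDegree = 2 + S.natDegree := by
        rw [hPS, natDegree_mul hq0 hS0]
        simp [natDegree_pow]
      have hSd : S.natDegree ≤ n - 1 := by omega
      obtain ⟨A, B, hAB⟩ := IH (n - 1) (by omega) S hSd hSnn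
      exact ⟨(X - C a) * A, (X - C a) * B, by rw [hPS, hAB]; ring⟩
    · -- no real root : P > 0 everywhere, take irreducible quadratic factor
      push_neg at hroot
      have hunit : ¬ IsUnit P := by
        intro h
        have := natDegree_eq_zero_of_isUnit h
        omega
      obtain ⟨g, hgirr, hgdvd⟩ := WfDvdMonoid.exists_irreducible_factor hunit hP0
      have hg2 : g.natDegree ≤ 2 := hgirr.natDegree_le_two
      have hg0 : g ≠ 0 := hgirr.ne_zero
      have hgnoroot : ∀ x : ℝ, ¬ g.IsRoot x := by
        intro x hx
        exact hroot x (hx.dvd hgdvd)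
      have hgne1 : g.natDegree ≠ 1 := by
        intro h1
        have hdeg1 : g.degree = 1 := by rw [degree_eq_natDegree hg0, h1]; rfl
        obtain ⟨x, hx⟩ := g.exists_root_of_degree_eq_one hdeg1
        exact hgnoroot x hx
      have hgne0 : g.natDegree ≠ 0 := by
        intro h0
        apply hgirr.not_isUnit
        rw [Polynomial.eq_C_of_natDegree_eq_zero h0]
        refine isUnit_C.mpr (isUnit_iff_ne_zero.mpr ?_)
        intro hc0
        apply hg0
        rw [Polynomial.eq_C_of_natDegree_eq_zero h0, hc0, map_zero]
      have hg2' : g.natDegree = 2 := by omega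
      -- make it monic
      set q : ℝ[X] := g * C g.leadingCoeff⁻¹ with hqdef
      have hqmonic : q.Monic := monic_mul_leadingCoeff_inv hg0
      have hqdvd : q ∣ P := by
        obtain ⟨T, hT⟩ := hgdvd
        refine ⟨C g.leadingCoeff * T, ?_⟩
        rw [hT, hqdef, mul_assoc, ← mul_assoc (C g.leadingCoeff⁻¹), ← C_mul,
          inv_mul_cancel₀ (leadingCoeff_ne_zero.mpr hg0), _root_.map_one, one_mul]
      have hlcne : g.leadingCoeff⁻¹ ≠ 0 := inv_ne_zero (leadingCoeff_ne_zero.mpr hg0)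
      have hq2 : q.natDegree = 2 := by
        rw [hqdef, natDegree_mul hg0 (C_ne_zero.mpr hlcne), natDegree_C, hg2']
      have hqnoroot : ∀ x : ℝ, q.eval x ≠ 0 := by
        intro x hx
        simp only [hqdef, eval_mul, eval_C, mul_eq_zero] at hx
        rcases hx with hx | hx
        · exact hgnoroot x hx
        · exact hlcne hx
      set b : ℝ := q.coeff 1 with hb
      set c : ℝ := q.coeff 0 with hc
      have hq : q = X ^ 2 + C b * X + C c := by
        have h3 : q.natDegree < 3 := by omega
        have hc2 : q.coeff 2 = 1 := by
          have := hqmonic.coeff_natDegree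
          rwa [hq2] at this
        conv_lhs => rw [q.as_sum_range' 3 h3]
        simp only [Finset.sum_range_succ, Finset.sum_range_zero, zero_add,
          ← C_mul_X_pow_eq_monomial, hc2, ← hb, ← hc, _root_.map_one]
        ring
      have hqeval : ∀ x : ℝ, q.eval x = x ^ 2 + b * x + c := by
        intro x; rw [hq]; simp
      have hdisc : 0 < c - (b / 2) ^ 2 := by
        by_contra h
        push_neg at h
        have h' : 0 ≤ b ^ 2 / 4 - c := by nlinarith
        have he : Real.sqrt (b ^ 2 / 4 - c) ^ 2 = b ^ 2 / 4 - c := Real.sq_sqrt h'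
        apply hqnoroot (-b / 2 + Real.sqrt (b ^ 2 / 4 - c))
        rw [hqeval]
        nlinarith
      set d : ℝ := Real.sqrt (c - (b / 2) ^ 2) with hd
      have hd2 : d ^ 2 = c - (b / 2) ^ 2 := Real.sq_sqrt hdisc.le
      have hdpos : 0 < d := Real.sqrt_pos.mpr hdisc
      have hCb : (C (b / 2) : ℝ[X]) * 2 = C b := by
        have h2 : (2 : ℝ[X]) = C 2 := (map_ofNat C 2).symm
        rw [h2, ← C_mul]
        norm_num
      have hqsplit : q = (X + C (b / 2)) ^ 2 + (C d) ^ 2 := by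
        rw [hq, ← map_pow, hd2, map_sub, map_pow]
        linear_combination (-X) * hCb
      have hqevalpos : ∀ x : ℝ, 0 < q.eval x := by
        intro x
        rw [hqeval]
        nlinarith [sq_nonneg (x + b / 2), hdisc]
      obtain ⟨S, hPS⟩ := hqdvd
      have hS0 : S ≠ 0 := by rintro rfl; rw [mul_zero] at hPS; exact hP0 hPS
      have hdegS : P.natDegree = 2 + S.natDegree := by
        rw [hPS, natDegree_mul hqmonic.ne_zero hS0, hq2]
      have hSnn : ∀ x : ℝ, 0 ≤ S.eval x := by
        intro x
        have h := hP x
        rw [hPS, eval_mul, mul_comm] at h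
        exact nonneg_of_mul_nonneg_left h (hqevalpos x)
      obtain ⟨A, B, hAB⟩ := IH (n - 1) (by omega) S (by omega) hSnn
      refine ⟨(X + C (b / 2)) * A + C d * B, (X + C (b / 2)) * B - C d * A, ?_⟩
      rw [hPS, hqsplit, hAB]
      ring

lemma sq_add_sq_natDegree (A B : ℝ[X]) (hA : A ≠ 0) (hBA : B.natDegree ≤ A.natDegree) :
    2 * A.natDegree ≤ (A ^ 2 + B ^ 2).natDegree := by
  apply le_natDegree_of_ne_zero
  rw [coeff_add]
  have hA2 : (A ^ 2).coeff (2 * A.natDegree) = A.leadingCoeff ^ 2 := by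
    rw [sq, two_mul, coeff_mul_degree_add_degree, sq]
  have hlead : A.leadingCoeff ≠ 0 := leadingCoeff_ne_zero.mpr hA
  rcases eq_or_ne B 0 with rfl | hB
  · have h0 : ((0 : ℝ[X]) ^ 2).coeff (2 * A.natDegree) = 0 := by simp
    rw [hA2, h0, add_zero]
    positivity
  · rcases lt_or_eq_of_le hBA with h | h
    · rw [hA2, coeff_eq_zero_of_natDegree_lt (by rw [natDegree_pow]; omega), add_zero]
      positivity
    · have hB2 : (B ^ 2).coeff (2 * A.natDegree) = B.leadingCoeff ^ 2 := by
        rw [sq, show 2 * A.natDegree = B.natDegree + B.natDegree by omega,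
          coeff_mul_degree_add_degree, sq]
      have hleadB : B.leadingCoeff ≠ 0 := leadingCoeff_ne_zero.mpr hB
      rw [hA2, hB2]
      positivity


/-- a real univariate polynomial of degree at most `2p` is nonnegative on ℝ
iff it admits a positive semidefinite Gram matrix representation
`P(x) = ∑_{i,j=0}^{p} Q_{ij} x^{i+j}`. -/
theorem nonneg_poly_iff_psd_gram (p : ℕ) (P : Polynomial ℝ) (hdeg : P.natDegree ≤ 2 * p) :
    (∀ x : ℝ, 0 ≤ P.eval x) ↔
    ∃ Q : Matrix (Fin (p + 1)) (Fin (p + 1)) ℝ, Q.IsSymm ∧ Q.PosSemidef ∧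
      ∀ x : ℝ, P.eval x =
        ∑ i : Fin (p + 1), ∑ j : Fin (p + 1), Q i j * x ^ (i.val + j.val) := by
  constructor
  · intro hP
    obtain ⟨A, B, hAB⟩ := sos_aux (2 * p) P hdeg hP
    -- degree bounds
    have bound : ∀ A B : ℝ[X], P = A ^ 2 + B ^ 2 → B.natDegree ≤ A.natDegree →
        A.natDegree ≤ p := by
      intro A B h hBA
      rcases eq_or_ne A 0 with rfl | hA
      · simp
      · have := sq_add_sq_natDegree A B hA hBA
        rw [← h] at this
        omega
    have hdA : A.natDegree ≤ p := by
      rcases le_total B.natDegree A.natDegree with h | h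
      · exact bound A B hAB h
      · exact le_trans h (bound B A (by rw [hAB]; ring) h)
    have hdB : B.natDegree ≤ p := by
      rcases le_total B.natDegree A.natDegree with h | h
      · exact le_trans h (bound A B hAB h)
      · exact bound B A (by rw [hAB]; ring) h
    refine ⟨fun i j => A.coeff i * A.coeff j + B.coeff i * B.coeff j, ?_, ?_, ?_⟩
    · ext i j
      show A.coeff j * A.coeff i + B.coeff j * B.coeff i = _
      ring
    · refine Matrix.PosSemidef.of_dotProduct_mulVec_nonneg ?_ ?_
      · ext i j
        show star (A.coeff j * A.coeff i + B.coeff j * B.coeff i) = _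
        simp only [star_trivial]
        ring
      · intro v
        have hv : dotProduct (star v) ((fun i j => A.coeff i * A.coeff j +
            B.coeff i * B.coeff j : Matrix (Fin (p+1)) (Fin (p+1)) ℝ) *ᵥ v) =
            (∑ i : Fin (p + 1), A.coeff i * v i) ^ 2 +
            (∑ i : Fin (p + 1), B.coeff i * v i) ^ 2 := by
          rw [sq, sq, Finset.sum_mul_sum, Finset.sum_mul_sum, ← Finset.sum_add_distrib]
          simp only [dotProduct, Matrix.mulVec, star_trivial, Finset.mul_sum]
          refine Finset.sum_congr rfl fun i _ => ?_
          rw [← Finset.sum_add_distrib]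
          refine Finset.sum_congr rfl fun j _ => ?_
          ring
        rw [hv]
        positivity
    · intro x
      have evalA : A.eval x = ∑ i : Fin (p + 1), A.coeff i * x ^ (i : ℕ) := by
        rw [A.eval_eq_sum_range' (Nat.lt_succ_of_le hdA), Finset.sum_range]
      have evalB : B.eval x = ∑ i : Fin (p + 1), B.coeff i * x ^ (i : ℕ) := by
        rw [B.eval_eq_sum_range' (Nat.lt_succ_of_le hdB), Finset.sum_range]
      rw [hAB]
      simp only [eval_add, eval_pow, evalA, evalB]
      rw [sq, sq, Finset.sum_mul_sum, Finset.sum_mul_sum, ← Finset.sum_add_distrib]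
      refine Finset.sum_congr rfl fun i _ => ?_
      rw [← Finset.sum_add_distrib]
      refine Finset.sum_congr rfl fun j _ => ?_
      rw [pow_add]
      ring
  · rintro ⟨Q, hsym, hpsd, hrep⟩ x
    have h := hpsd.dotProduct_mulVec_nonneg (fun i : Fin (p + 1) => x ^ (i : ℕ))
    rw [hrep x]
    convert h using 1
    · rfl
    simp only [dotProduct, Matrix.mulVec, star_trivial, Finset.mul_sum, Pi.star_apply]
    refine Finset.sum_congr rfl fun i _ => ?_
    refine Finset.sum_congr rfl fun j _ => ?_
    rw [pow_add]
    ring
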